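/- Let p ∈ [1,∞), d ≥ 1, and c̄ > 0. There exists a constant C = C(p, c̄, d) such that for every x ∈ ℝ^d, every R > 0, every measurable set Ω ⊆ x + (-R,R)^d with |Ω| ≥ c̄ R^d, and every affine map a : ℝ^d → ℝ^d, one has ‖a‖_{L^p(x+(-R,R)^d)} ≤ C ‖a‖_{L^p(Ω)}. -/

import Mathlib

open MeasureTheory

/-- The open cube of center `x` and half side length `R` in `ℝ^d`. -/
def cube (d : ℕ) (x : EuclideanSpace ℝ (Fin d)) (R : ℝ) : Set (EuclideanSpace ℝ (Fin d)) :=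
  {y | ∀ i, y i ∈ Set.Ioo (x i - R) (x i + R)}

/-- The affine map `y ↦ A y + b` on `ℝ^d`. -/
noncomputable def affMap (d : ℕ) (A : Matrix (Fin d) (Fin d) ℝ) (b : EuclideanSpace ℝ (Fin d)) :
    EuclideanSpace ℝ (Fin d) → EuclideanSpace ℝ (Fin d) :=
  fun y => (WithLp.equiv 2 (Fin d → ℝ)).symm (A.mulVec (WithLp.equiv 2 (Fin d → ℝ) y)) + b

namespace AffNC

variable {d : ℕ}

lemma cube_eq (x : EuclideanSpace ℝ (Fin d)) (R : ℝ) :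
    cube d x R = ((MeasurableEquiv.toLp 2 (Fin d → ℝ)).symm) ⁻¹'
      (Set.univ.pi fun i => Set.Ioo (x i - R) (x i + R)) := by
  ext y
  simp [cube, Set.mem_pi, MeasurableEquiv.coe_toLp_symm]

lemma measurableSet_cube (x : EuclideanSpace ℝ (Fin d)) (R : ℝ) :
    MeasurableSet (cube d x R) := by
  rw [cube_eq]
  exact ((MeasurableEquiv.toLp 2 (Fin d → ℝ)).symm).measurable
    (MeasurableSet.univ_pi fun i => measurableSet_Ioo)

lemma volume_cube (x : EuclideanSpace ℝ (Fin d)) (R : ℝ) :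
    volume (cube d x R) = ENNReal.ofReal (2 * R) ^ d := by
  rw [cube_eq, (EuclideanSpace.volume_preserving_symm_measurableEquiv_toLp (Fin d)).measure_preimage
    (MeasurableSet.univ_pi fun i => measurableSet_Ioo).nullMeasurableSet, volume_pi_pi]
  have h : ∀ i : Fin d, x i + R - (x i - R) = 2 * R := fun i => by ring
  simp only [Real.volume_Ioo, h]
  rw [Finset.prod_const, Finset.card_univ, Fintype.card_fin]

lemma det_updateRow_one (j : Fin d) (v : Fin d → ℝ) :
    ((1 : Matrix (Fin d) (Fin d) ℝ).updateRow j v).det = v j := by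
  have h : v = ∑ k, v k • (1 : Matrix (Fin d) (Fin d) ℝ) k := by
    funext l
    simp [Matrix.one_apply]
  rw [show ((1 : Matrix (Fin d) (Fin d) ℝ).updateRow j v)
      = (1 : Matrix (Fin d) (Fin d) ℝ).updateRow j (∑ k, v k • (1 : Matrix (Fin d) (Fin d) ℝ) k)
      from by rw [← h], Matrix.det_updateRow_sum]
  simp

/-- The measure of the sublevel set of an affine scalar function inside the cube. -/
lemma volume_sublevel (x : EuclideanSpace ℝ (Fin d)) (R t c : ℝ) (v : Fin d → ℝ) (j : Fin d)
    (hvj : v j ≠ 0) :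
    volume {y : EuclideanSpace ℝ (Fin d) | y ∈ cube d x R ∧ |(∑ i, v i * y i) + c| < t}
      ≤ ENNReal.ofReal |(v j)⁻¹| *
        (ENNReal.ofReal (2 * t) * ENNReal.ofReal (2 * R) ^ (d - 1)) := by
  classical
  set M : Matrix (Fin d) (Fin d) ℝ := (1 : Matrix (Fin d) (Fin d) ℝ).updateRow j v with hM
  set e : EuclideanSpace ℝ (Fin d) ≃ₗ[ℝ] (Fin d → ℝ) := WithLp.linearEquiv 2 ℝ (Fin d → ℝ) with he
  set L : EuclideanSpace ℝ (Fin d) →ₗ[ℝ] EuclideanSpace ℝ (Fin d) :=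
    (e.symm : (Fin d → ℝ) →ₗ[ℝ] EuclideanSpace ℝ (Fin d)) ∘ₗ (Matrix.toLin' M) ∘ₗ
      (e : EuclideanSpace ℝ (Fin d) →ₗ[ℝ] (Fin d → ℝ)) with hL
  have hdet : LinearMap.det L = v j := by
    have h1 : L = (e.symm : (Fin d → ℝ) →ₗ[ℝ] EuclideanSpace ℝ (Fin d)) ∘ₗ (Matrix.toLin' M) ∘ₗ
        ((e.symm).symm : EuclideanSpace ℝ (Fin d) →ₗ[ℝ] (Fin d → ℝ)) := rfl
    rw [h1, LinearMap.det_conj (Matrix.toLin' M) e.symm, LinearMap.det_toLin',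
      det_updateRow_one]
  have hdet0 : LinearMap.det L ≠ 0 := by rw [hdet]; exact hvj
  set B : Set (EuclideanSpace ℝ (Fin d)) := ((MeasurableEquiv.toLp 2 (Fin d → ℝ)).symm) ⁻¹'
    (Set.univ.pi fun k => if k = j then Set.Ioo (-c - t) (t - c)
      else Set.Ioo (x k - R) (x k + R)) with hB
  have hsub : {y : EuclideanSpace ℝ (Fin d) | y ∈ cube d x R ∧ |(∑ i, v i * y i) + c| < t}
      ⊆ L ⁻¹' B := by
    intro y hy
    obtain ⟨hyc, hyl⟩ := hy
    have hcoord : ∀ k, (L y : EuclideanSpace ℝ (Fin d)) k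
        = if k = j then ∑ i, v i * y i else y k := by
      intro k
      have : (L y : EuclideanSpace ℝ (Fin d)) k = (M.mulVec fun i => y i) k := by
        simp [hL, Matrix.toLin'_apply]
        rfl
      rw [this]
      by_cases hk : k = j
      · subst hk
        simp [Matrix.mulVec, hM, Matrix.updateRow_self, dotProduct]
      · simp [Matrix.mulVec, hM, Matrix.updateRow_ne hk, dotProduct, Matrix.one_apply, hk]
    simp only [Set.mem_preimage, hB, Set.mem_pi, Set.mem_univ, forall_true_left]
    intro k
    have hek : ((MeasurableEquiv.toLp 2 (Fin d → ℝ)).symm) (L y) k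
        = (L y : EuclideanSpace ℝ (Fin d)) k := rfl
    by_cases hk : k = j
    · subst hk
      rw [if_pos rfl, hek, hcoord k, if_pos rfl]
      have h4 := abs_lt.1 hyl
      refine Set.mem_Ioo.2 ⟨?_, ?_⟩
      · linarith [h4.1]
      · linarith [h4.2]
    · rw [if_neg hk, hek, hcoord k, if_neg hk]
      exact hyc k
  calc volume {y : EuclideanSpace ℝ (Fin d) | y ∈ cube d x R ∧ |(∑ i, v i * y i) + c| < t}
      ≤ volume (L ⁻¹' B) := measure_mono hsub
    _ = ENNReal.ofReal |(LinearMap.det L)⁻¹| * volume B :=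
        Measure.addHaar_preimage_linearMap volume hdet0 B
    _ = ENNReal.ofReal |(v j)⁻¹| * volume B := by rw [hdet]
    _ ≤ ENNReal.ofReal |(v j)⁻¹| *
        (ENNReal.ofReal (2 * t) * ENNReal.ofReal (2 * R) ^ (d - 1)) := by
        gcongr
        rw [hB, (EuclideanSpace.volume_preserving_symm_measurableEquiv_toLp (Fin d)).measure_preimage
          (MeasurableSet.univ_pi fun k => by
            split <;> exact measurableSet_Ioo).nullMeasurableSet, volume_pi_pi]
        rw [← Finset.mul_prod_erase Finset.univ _ (Finset.mem_univ j)]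
        have h1 : (if j = j then Set.Ioo (-c - t) (t - c) else Set.Ioo (x j - R) (x j + R))
            = Set.Ioo (-c - t) (t - c) := if_pos rfl
        rw [h1, Real.volume_Ioo]
        have h2 : t - c - (-c - t) = 2 * t := by ring
        rw [h2]
        have h3 : ∀ k ∈ Finset.univ.erase j,
            volume (if k = j then Set.Ioo (-c - t) (t - c) else Set.Ioo (x k - R) (x k + R))
            = ENNReal.ofReal (2 * R) := by
          intro k hk
          rw [if_neg (Finset.ne_of_mem_erase hk), Real.volume_Ioo]
          congr 1
          ring
        rw [Finset.prod_congr rfl h3, Finset.prod_const, Finset.card_erase_of_mem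
          (Finset.mem_univ j), Finset.card_univ, Fintype.card_fin]

/-- The difference of an affine scalar function at two points of the cube. -/
lemma lin_diff_le {x y : EuclideanSpace ℝ (Fin d)} {R : ℝ} (v : Fin d → ℝ)
    (hy : y ∈ cube d x R) :
    |(∑ i, v i * y i) - (∑ i, v i * x i)| ≤ R * ∑ i, |v i| := by
  have h1 : (∑ i, v i * y i) - (∑ i, v i * x i) = ∑ i, v i * (y i - x i) := by
    simp only [mul_sub, Finset.sum_sub_distrib]
  rw [h1]
  calc |∑ i, v i * (y i - x i)| ≤ ∑ i, |v i * (y i - x i)| := Finset.abs_sum_le_sum_abs _ _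
    _ ≤ ∑ i, |v i| * R := by
        refine Finset.sum_le_sum fun i _ => ?_
        rw [abs_mul]
        refine mul_le_mul_of_nonneg_left ?_ (abs_nonneg _)
        have h2 := (hy i).1
        have h3 := (hy i).2
        rw [abs_le]
        constructor <;> simp only [Set.mem_Ioo] at h2 h3 <;> linarith
    _ = R * ∑ i, |v i| := by rw [Finset.mul_sum]; simp [mul_comm]

/-- Pointwise bound for an affine scalar function on the cube. -/
lemma abs_lin_le {x y : EuclideanSpace ℝ (Fin d)} {R : ℝ} (hR : 0 ≤ R) (v : Fin d → ℝ) (c : ℝ)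
    (hy : y ∈ cube d x R) :
    |(∑ i, v i * y i) + c| ≤ |(∑ i, v i * x i) + c| + R * ∑ i, |v i| := by
  have h1 : (∑ i, v i * y i) + c = ((∑ i, v i * x i) + c) + ∑ i, v i * (y i - x i) := by
    simp only [mul_sub, Finset.sum_sub_distrib]
    ring
  rw [h1]
  refine (abs_add_le _ _).trans ?_
  gcongr
  calc |∑ i, v i * (y i - x i)| ≤ ∑ i, |v i * (y i - x i)| := Finset.abs_sum_le_sum_abs _ _
    _ ≤ ∑ i, |v i| * R := by
        refine Finset.sum_le_sum fun i _ => ?_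
        rw [abs_mul]
        refine mul_le_mul_of_nonneg_left ?_ (abs_nonneg _)
        have h2 := (hy i).1
        have h3 := (hy i).2
        rw [abs_le]
        constructor <;> simp only [Set.mem_Ioo] at h2 h3 <;> linarith
    _ = R * ∑ i, |v i| := by rw [Finset.mul_sum]; simp [mul_comm]

/-- Key measure lower bound: the part of `Ω` where the affine function is at least
`ε` times its natural size has measure at least `cbar/2 * R^d`. -/
lemma key (hd : 1 ≤ d) {cbar : ℝ} (hcbar : 0 < cbar) (ε : ℝ)
    (hε : ε = min (cbar / (2 ^ (d + 3) * d)) 4⁻¹)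
    (x : EuclideanSpace ℝ (Fin d)) (R : ℝ) (hR : 0 < R)
    (Ω : Set (EuclideanSpace ℝ (Fin d))) (hΩ : Ω ⊆ cube d x R)
    (hvol : ENNReal.ofReal (cbar * R ^ d) ≤ volume Ω) (v : Fin d → ℝ) (c : ℝ) :
    ENNReal.ofReal (cbar / 2 * R ^ d) ≤
      volume (Ω \ {y : EuclideanSpace ℝ (Fin d) |
        |(∑ i, v i * y i) + c| < ε * (|(∑ i, v i * x i) + c| + R * ∑ i, |v i|)}) := by
  classical
  obtain ⟨m, rfl⟩ : ∃ m, d = m + 1 := ⟨d - 1, (Nat.succ_pred_eq_of_pos hd).symm⟩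
  have hdr : (0:ℝ) < ((m + 1 : ℕ) : ℝ) := by positivity
  set Mv := |(∑ i, v i * x i) + c| + R * ∑ i, |v i| with hMv
  have hsumnn : 0 ≤ ∑ i, |v i| := Finset.sum_nonneg fun i _ => abs_nonneg _
  have hMvnn : 0 ≤ Mv := add_nonneg (abs_nonneg _) (mul_nonneg hR.le hsumnn)
  have hε0 : 0 < ε := by
    rw [hε]
    exact lt_min (by positivity) (by norm_num)
  have hε4 : ε ≤ 4⁻¹ := hε ▸ min_le_right _ _
  have hεu : ε ≤ cbar / (2 ^ (m + 4) * ((m + 1 : ℕ) : ℝ)) := by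
    have h4 : m + 1 + 3 = m + 4 := by omega
    rw [hε, ← h4]
    exact min_le_left _ _
  set t := ε * Mv with ht
  have hcube : volume {y : EuclideanSpace ℝ (Fin (m+1)) | y ∈ cube (m+1) x R ∧
      |(∑ i, v i * y i) + c| < t} ≤ ENNReal.ofReal (cbar / 2 * R ^ (m+1)) := by
    rcases le_or_gt (R * ∑ i, |v i|) (Mv / 4) with hcase | hcase
    · have hempty : {y : EuclideanSpace ℝ (Fin (m+1)) | y ∈ cube (m+1) x R ∧
          |(∑ i, v i * y i) + c| < t} = ∅ := by
        ext y
        simp only [Set.mem_setOf_eq, Set.mem_empty_iff_false, iff_false, not_and, not_lt]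
        intro hy
        have hdiff := lin_diff_le v hy
        have h5 := abs_sub_abs_le_abs_sub ((∑ i, v i * x i) + c) ((∑ i, v i * y i) + c)
        have h6 : ((∑ i, v i * x i) + c) - ((∑ i, v i * y i) + c)
            = (∑ i, v i * x i) - (∑ i, v i * y i) := by ring
        rw [h6] at h5
        have h7 : |(∑ i, v i * x i) - (∑ i, v i * y i)|
            = |(∑ i, v i * y i) - (∑ i, v i * x i)| := abs_sub_comm _ _
        rw [h7] at h5
        have htb : t ≤ 4⁻¹ * Mv := by
          rw [ht]
          exact mul_le_mul_of_nonneg_right hε4 hMvnn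
        linarith
      rw [hempty]
      simp
    · have hMvpos : 0 < Mv := by
        have := abs_nonneg ((∑ i, v i * x i) + c)
        rw [hMv]
        nlinarith
      have hsumpos : 0 < ∑ i, |v i| := by nlinarith
      obtain ⟨j, -, hj⟩ := Finset.exists_max_image Finset.univ (fun i => |v i|)
        ⟨⟨0, by omega⟩, Finset.mem_univ _⟩
      have hsum_le : ∑ i, |v i| ≤ ((m + 1 : ℕ) : ℝ) * |v j| := by
        calc ∑ i, |v i| ≤ ∑ _i : Fin (m+1), |v j| :=
              Finset.sum_le_sum fun i _ => hj i (Finset.mem_univ i)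
          _ = ((m + 1 : ℕ) : ℝ) * |v j| := by
              rw [Finset.sum_const, Finset.card_univ, Fintype.card_fin, nsmul_eq_mul]
      have hvj : 0 < |v j| := by nlinarith
      have hvj0 : v j ≠ 0 := fun h => by simp [h] at hvj
      refine (volume_sublevel x R t c v j hvj0).trans ?_
      have h2R : (0:ℝ) ≤ 2 * R := by linarith
      have ht0 : 0 ≤ t := mul_nonneg hε0.le hMvnn
      rw [← ENNReal.ofReal_pow h2R, ← ENNReal.ofReal_mul (by positivity),
        ← ENNReal.ofReal_mul (abs_nonneg _)]
      refine ENNReal.ofReal_le_ofReal ?_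
      have hinv : |(v j)⁻¹| ≤ 4 * R * ((m + 1 : ℕ) : ℝ) / Mv := by
        rw [abs_inv]
        rw [inv_le_comm₀ hvj (by positivity), inv_div, div_le_iff₀ (by positivity)]
        nlinarith [hsum_le, hcase]
      have hexp : (m + 1) - 1 = m := by omega
      rw [hexp]
      calc |(v j)⁻¹| * (2 * t * (2 * R) ^ m)
          ≤ (4 * R * ((m + 1 : ℕ) : ℝ) / Mv) * (2 * t * (2 * R) ^ m) := by
            refine mul_le_mul_of_nonneg_right hinv (by positivity)
        _ = 8 * ((m + 1 : ℕ) : ℝ) * ε * (2 ^ m * R ^ (m + 1)) := by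
            rw [ht, mul_pow]
            field_simp
            ring
        _ ≤ 8 * ((m + 1 : ℕ) : ℝ) * (cbar / (2 ^ (m + 4) * ((m + 1 : ℕ) : ℝ)))
              * (2 ^ m * R ^ (m + 1)) := by
            gcongr
        _ = cbar / 2 * R ^ (m + 1) := by
            field_simp
            ring
  have hsetcompl : Ω \ {y : EuclideanSpace ℝ (Fin (m+1)) | |(∑ i, v i * y i) + c| < t}
      = Ω \ {y : EuclideanSpace ℝ (Fin (m+1)) | y ∈ cube (m+1) x R ∧
          |(∑ i, v i * y i) + c| < t} := by
    ext y
    simp only [Set.mem_diff, Set.mem_setOf_eq]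
    constructor
    · rintro ⟨hyΩ, h⟩
      exact ⟨hyΩ, fun hc => h hc.2⟩
    · rintro ⟨hyΩ, h⟩
      exact ⟨hyΩ, fun hc => h ⟨hΩ hyΩ, hc⟩⟩
  rw [hsetcompl]
  calc ENNReal.ofReal (cbar / 2 * R ^ (m+1))
      = ENNReal.ofReal (cbar * R ^ (m+1)) - ENNReal.ofReal (cbar / 2 * R ^ (m+1)) := by
        rw [← ENNReal.ofReal_sub _ (by positivity)]
        congr 1
        ring
    _ ≤ volume Ω - volume {y : EuclideanSpace ℝ (Fin (m+1)) | y ∈ cube (m+1) x R ∧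
          |(∑ i, v i * y i) + c| < t} := tsub_le_tsub hvol hcube
    _ ≤ volume (Ω \ {y : EuclideanSpace ℝ (Fin (m+1)) | y ∈ cube (m+1) x R ∧
          |(∑ i, v i * y i) + c| < t}) := le_measure_diff

lemma abs_coord_le_norm (w : EuclideanSpace ℝ (Fin d)) (i : Fin d) : |w i| ≤ ‖w‖ := by
  rw [EuclideanSpace.norm_eq]
  have h1 : |w i| = Real.sqrt (‖w i‖ ^ 2) := by
    rw [Real.norm_eq_abs, Real.sqrt_sq_eq_abs, abs_abs]
  rw [h1]
  exact Real.sqrt_le_sqrt (Finset.single_le_sum (f := fun j : Fin d => ‖w j‖ ^ 2)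
    (fun j _ => sq_nonneg _) (Finset.mem_univ i))

lemma norm_le_sum_abs (w : EuclideanSpace ℝ (Fin d)) : ‖w‖ ≤ ∑ i, |w i| := by
  rw [EuclideanSpace.norm_eq]
  calc Real.sqrt (∑ i, ‖w i‖ ^ 2) ≤ Real.sqrt ((∑ i, ‖w i‖) ^ 2) :=
        Real.sqrt_le_sqrt (Finset.sum_sq_le_sq_sum_of_nonneg fun i _ => norm_nonneg _)
    _ = ∑ i, ‖w i‖ := Real.sqrt_sq (Finset.sum_nonneg fun i _ => norm_nonneg _)
    _ = ∑ i, |w i| := by simp [Real.norm_eq_abs]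

lemma affMap_apply (A : Matrix (Fin d) (Fin d) ℝ) (b : EuclideanSpace ℝ (Fin d))
    (y : EuclideanSpace ℝ (Fin d)) (i : Fin d) :
    affMap d A b y i = (∑ k, A i k * y k) + b i := by
  simp [affMap, Matrix.mulVec, dotProduct]

end AffNC

/-- Lemma 4.1: for `p ∈ [1,∞)`, `c̄ > 0`, there is `C = C(p,c̄,d)` such that for every cube
`Q = x + (-R,R)^d`, every measurable `Ω ⊆ Q` with `|Ω| ≥ c̄ R^d` and every affine map `a`,
`‖a‖_{L^p(Q)} ≤ C ‖a‖_{L^p(Ω)}`. -/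
theorem affine_norm_comparison (d : ℕ) (hd : 1 ≤ d) (p : ℝ) (hp : 1 ≤ p)
    (cbar : ℝ) (hcbar : 0 < cbar) :
    ∃ C : ℝ, 0 < C ∧
      ∀ (x : EuclideanSpace ℝ (Fin d)) (R : ℝ), 0 < R →
        ∀ Ω : Set (EuclideanSpace ℝ (Fin d)), MeasurableSet Ω → Ω ⊆ cube d x R →
          ENNReal.ofReal (cbar * R ^ d) ≤ volume Ω →
          ∀ (A : Matrix (Fin d) (Fin d) ℝ) (b : EuclideanSpace ℝ (Fin d)),
            eLpNorm (affMap d A b) (ENNReal.ofReal p) (volume.restrict (cube d x R)) ≤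
              ENNReal.ofReal C * eLpNorm (affMap d A b) (ENNReal.ofReal p) (volume.restrict Ω) := by
  classical
  have hdr : (0:ℝ) < (d : ℝ) := by exact_mod_cast hd
  set ε := min (cbar / (2 ^ (d + 3) * d)) 4⁻¹ with hε
  have hε0 : 0 < ε := lt_min (by positivity) (by norm_num)
  have hp0 : (0:ℝ) < p := by linarith
  refine ⟨(d : ℝ) * (2 ^ (d + 1) / cbar) ^ (1/p) / ε, by positivity, ?_⟩
  intro x R hR Ω hΩmeas hΩsub hΩvol A b
  set q := ENNReal.ofReal p with hq
  have hq0 : q ≠ 0 := by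
    simp only [hq, Ne, ENNReal.ofReal_eq_zero, not_le]
    linarith
  have hqtoReal : q.toReal = p := ENNReal.toReal_ofReal hp0.le
  set Mi : Fin d → ℝ := fun i => |(∑ k, A i k * x k) + b i| + R * ∑ k, |A i k| with hMi
  have hMi0 : ∀ i, 0 ≤ Mi i := fun i => add_nonneg (abs_nonneg _)
    (mul_nonneg hR.le (Finset.sum_nonneg fun k _ => abs_nonneg _))
  set Mtot := ∑ i, Mi i with hMtot
  have hMtot0 : 0 ≤ Mtot := Finset.sum_nonneg fun i _ => hMi0 i
  have hbound : ∀ y ∈ cube d x R, ‖affMap d A b y‖ ≤ Mtot := by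
    intro y hy
    calc ‖affMap d A b y‖ ≤ ∑ i, |affMap d A b y i| := AffNC.norm_le_sum_abs _
      _ ≤ ∑ i, Mi i := by
          refine Finset.sum_le_sum fun i _ => ?_
          rw [AffNC.affMap_apply]
          exact AffNC.abs_lin_le hR.le _ _ hy
  have hupper : eLpNorm (affMap d A b) q (volume.restrict (cube d x R))
      ≤ (ENNReal.ofReal (2 * R) ^ d) ^ p⁻¹ * ENNReal.ofReal Mtot := by
    have h1 := eLpNorm_le_of_ae_bound (μ := volume.restrict (cube d x R)) (p := q)
      (f := affMap d A b) (C := Mtot)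
      ((ae_restrict_mem (AffNC.measurableSet_cube x R)).mono hbound)
    rwa [Measure.restrict_apply_univ, AffNC.volume_cube, hqtoReal] at h1
  by_cases hM0 : Mtot = 0
  · refine le_trans hupper ?_
    rw [hM0]
    simp
  have hMtotpos : 0 < Mtot := lt_of_le_of_ne hMtot0 (Ne.symm hM0)
  obtain ⟨i0, -, hi0⟩ := Finset.exists_max_image Finset.univ Mi ⟨⟨0, hd⟩, Finset.mem_univ _⟩
  have hMle : Mtot ≤ (d:ℝ) * Mi i0 := by
    calc Mtot ≤ ∑ _i : Fin d, Mi i0 := Finset.sum_le_sum fun i _ => hi0 i (Finset.mem_univ i)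
      _ = (d:ℝ) * Mi i0 := by
          rw [Finset.sum_const, Finset.card_univ, Fintype.card_fin, nsmul_eq_mul]
  have hMi0pos : 0 < Mi i0 := by nlinarith [hMi0 i0]
  have hkey := AffNC.key hd hcbar ε hε x R hR Ω hΩsub hΩvol (A i0) (b i0)
  set S := Ω \ {y : EuclideanSpace ℝ (Fin d) |
    |(∑ k, A i0 k * y k) + b i0| <
      ε * (|(∑ k, A i0 k * x k) + b i0| + R * ∑ k, |A i0 k|)} with hS
  have hεMi : ε * (|(∑ k, A i0 k * x k) + b i0| + R * ∑ k, |A i0 k|) = ε * Mi i0 := rfl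
  have hSmeas : MeasurableSet S := by
    refine hΩmeas.diff ?_
    have hmeasl : Measurable fun y : EuclideanSpace ℝ (Fin d) =>
        |(∑ k, A i0 k * y k) + b i0| := by
      apply Measurable.abs
      apply Measurable.add_const
      apply Finset.measurable_sum
      intro k _
      exact ((measurable_pi_apply k).comp
        ((MeasurableEquiv.toLp 2 (Fin d → ℝ)).symm).measurable).const_mul _
    exact measurableSet_lt hmeasl measurable_const
  have hSvol : ENNReal.ofReal (cbar / 2 * R ^ d) ≤ volume S := hkey
  have hSne : volume.restrict S ≠ 0 := by
    rw [Ne, Measure.restrict_eq_zero]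
    intro h0
    rw [h0, le_zero_iff, ENNReal.ofReal_eq_zero] at hSvol
    have : (0:ℝ) < cbar / 2 * R ^ d := by positivity
    linarith
  have hlow : ∀ᵐ y ∂(volume.restrict S), ‖(fun _ : EuclideanSpace ℝ (Fin d) => ε * Mi i0) y‖
      ≤ ‖affMap d A b y‖ := by
    refine (ae_restrict_mem hSmeas).mono fun y hy => ?_
    have h2 : ¬ (|(∑ k, A i0 k * y k) + b i0| < ε * Mi i0) := by
      have h3 := hy.2
      simp only [Set.mem_setOf_eq, hεMi] at h3
      exact h3
    calc ‖(fun _ : EuclideanSpace ℝ (Fin d) => ε * Mi i0) y‖ = ε * Mi i0 :=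
          Real.norm_of_nonneg (by positivity)
      _ ≤ |(∑ k, A i0 k * y k) + b i0| := not_lt.1 h2
      _ = |affMap d A b y i0| := by rw [AffNC.affMap_apply]
      _ ≤ ‖affMap d A b y‖ := AffNC.abs_coord_le_norm _ i0
  have hconst : ENNReal.ofReal (ε * Mi i0) * (volume S) ^ (1 / p)
      ≤ eLpNorm (affMap d A b) q (volume.restrict S) := by
    have h2 := eLpNorm_mono_ae (p := q) hlow
    have h3 : eLpNorm (fun _ : EuclideanSpace ℝ (Fin d) => ε * Mi i0) q (volume.restrict S)
        = ENNReal.ofReal (ε * Mi i0) * (volume S) ^ (1 / p) := by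
      rw [eLpNorm_const _ hq0 hSne, Measure.restrict_apply_univ, hqtoReal]
      congr 1
      rw [← Real.enorm_eq_ofReal (by positivity)]
    rw [← h3]
    exact h2
  calc eLpNorm (affMap d A b) q (volume.restrict (cube d x R))
      ≤ (ENNReal.ofReal (2 * R) ^ d) ^ p⁻¹ * ENNReal.ofReal Mtot := hupper
    _ ≤ ENNReal.ofReal ((d : ℝ) * (2 ^ (d + 1) / cbar) ^ (1/p) / ε) *
        (ENNReal.ofReal (ε * Mi i0) * ENNReal.ofReal (cbar / 2 * R ^ d) ^ (1 / p)) := by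
        have hL : (ENNReal.ofReal (2 * R) ^ d) ^ p⁻¹ * ENNReal.ofReal Mtot
            = ENNReal.ofReal (((2*R)^d) ^ p⁻¹ * Mtot) := by
          rw [← ENNReal.ofReal_pow (by linarith : (0:ℝ) ≤ 2*R),
            ENNReal.ofReal_rpow_of_pos (by positivity),
            ← ENNReal.ofReal_mul (by positivity)]
        have hRr : ENNReal.ofReal ((d : ℝ) * (2 ^ (d + 1) / cbar) ^ (1/p) / ε) *
            (ENNReal.ofReal (ε * Mi i0) * ENNReal.ofReal (cbar / 2 * R ^ d) ^ (1 / p))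
            = ENNReal.ofReal ((d : ℝ) * (2 ^ (d + 1) / cbar) ^ (1/p) / ε *
              (ε * Mi i0 * (cbar / 2 * R ^ d) ^ (1/p))) := by
          rw [ENNReal.ofReal_rpow_of_pos (by positivity),
            ← ENNReal.ofReal_mul (by positivity), ← ENNReal.ofReal_mul (by positivity)]
        rw [hL, hRr]
        refine ENNReal.ofReal_le_ofReal ?_
        have hbase : ((2*R)^d : ℝ) = (2 ^ (d+1) / cbar) * (cbar / 2 * R ^ d) := by
          rw [mul_pow]
          field_simp
          ring
        have hrpow : ((2*R)^d : ℝ) ^ p⁻¹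
            = (2 ^ (d+1) / cbar) ^ (1/p) * (cbar/2*R^d) ^ (1/p) := by
          rw [hbase, ← Real.mul_rpow (by positivity) (by positivity), one_div]
        rw [hrpow]
        calc (2 ^ (d+1) / cbar) ^ (1/p) * (cbar/2*R^d) ^ (1/p) * Mtot
            ≤ (2 ^ (d+1) / cbar) ^ (1/p) * (cbar/2*R^d) ^ (1/p) * ((d:ℝ) * Mi i0) :=
              mul_le_mul_of_nonneg_left hMle (by positivity)
          _ = (d : ℝ) * (2 ^ (d+1)/cbar) ^ (1/p) / ε * (ε * Mi i0 * (cbar/2*R^d) ^ (1/p)) := by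
              field_simp
    _ ≤ ENNReal.ofReal ((d : ℝ) * (2 ^ (d + 1) / cbar) ^ (1/p) / ε) *
        (ENNReal.ofReal (ε * Mi i0) * (volume S) ^ (1 / p)) := by
        refine mul_le_mul_right (mul_le_mul_right ?_ _) _
        exact ENNReal.rpow_le_rpow hSvol (by positivity)
    _ ≤ ENNReal.ofReal ((d : ℝ) * (2 ^ (d + 1) / cbar) ^ (1/p) / ε) *
        eLpNorm (affMap d A b) q (volume.restrict S) := mul_le_mul_right hconst _
    _ ≤ ENNReal.ofReal ((d : ℝ) * (2 ^ (d + 1) / cbar) ^ (1/p) / ε) *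
        eLpNorm (affMap d A b) q (volume.restrict Ω) :=
        mul_le_mul_right (eLpNorm_mono_measure _ (Measure.restrict_mono Set.diff_subset le_rfl)) _
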